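/- Let P be a finite poset and x ∈ P. If there exist incomparable elements y, z with y ≤ x and z ≤ x, then there exist incomparable elements y' ≤ y and z' ≤ z with level(y') = level(z'), where level(w) is the maximal length of a chain in P with maximal element w. -/

import Mathlib

/-- The level of `x` in a finite poset: the maximal length (cardinality) of a chain
whose greatest element is `x`. -/
noncomputable def level {P : Type*} [PartialOrder P] [Fintype P] (x : P) : ℕ :=
  sSup {n | ∃ C : Finset P, IsChain (· ≤ ·) (C : Set P) ∧ x ∈ C ∧
    (∀ y ∈ C, y ≤ x) ∧ C.card = n}

section aux
variable {P : Type*} [PartialOrder P] [Fintype P]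

private def levSet (x : P) : Set ℕ :=
  {n | ∃ C : Finset P, IsChain (· ≤ ·) (C : Set P) ∧ x ∈ C ∧
    (∀ y ∈ C, y ≤ x) ∧ C.card = n}

private lemma level_eq (x : P) : level x = sSup (levSet x) := rfl

private lemma levSet_bdd (x : P) : BddAbove (levSet x) := by
  refine ⟨Fintype.card P, fun n hn => ?_⟩
  obtain ⟨C, _, _, _, hcard⟩ := hn
  exact hcard ▸ C.card_le_univ

private lemma one_mem_levSet (x : P) : 1 ∈ levSet x := by
  refine ⟨{x}, ?_, by simp, by simp, by simp⟩
  rw [Finset.coe_singleton]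
  exact Set.subsingleton_singleton.isChain

private lemma level_mem (x : P) : level x ∈ levSet x :=
  Nat.sSup_mem ⟨1, one_mem_levSet x⟩ (levSet_bdd x)

private lemma one_le_level (x : P) : 1 ≤ level x :=
  le_csSup (levSet_bdd x) (one_mem_levSet x)

private lemma level_le_of_mem {x : P} {n : ℕ} (h : n ∈ levSet x) : n ≤ level x :=
  le_csSup (levSet_bdd x) h

private lemma level_lt_level {a b : P} (h : a < b) : level a < level b := by
  classical
  obtain ⟨C, hC, haC, hle, hcard⟩ := level_mem a
  have hbC : b ∉ C := fun hb => absurd (hle b hb) (not_le_of_gt h)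
  have hmem : level a + 1 ∈ levSet b := by
    refine ⟨insert b C, ?_, Finset.mem_insert_self _ _, ?_, ?_⟩
    · rw [Finset.coe_insert]
      exact hC.insert (fun c hc _ => Or.inr ((hle c hc).trans h.le))
    · intro c hc
      rcases Finset.mem_insert.mp hc with rfl | hc
      · exact le_rfl
      · exact (hle c hc).trans h.le
    · rw [Finset.card_insert_of_notMem hbC, hcard]
  have := level_le_of_mem hmem
  omega

private lemma level_le_level {a b : P} (h : a ≤ b) : level a ≤ level b := by
  rcases eq_or_lt_of_le h with rfl | h
  · exact le_rfl
  · exact (level_lt_level h).le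

/-- If `level a ≥ 2`, there is `a' < a` with `level a' = level a - 1`. -/
private lemma exists_pred_level {a : P} (h : 2 ≤ level a) :
    ∃ a' : P, a' < a ∧ level a' = level a - 1 := by
  classical
  obtain ⟨C, hC, haC, hle, hcard⟩ := level_mem a
  set C' := C.erase a with hC'
  have hcard' : C'.card = level a - 1 := by
    rw [hC', Finset.card_erase_of_mem haC, hcard]
  have hne : C'.Nonempty := by
    rw [← Finset.card_pos, hcard']; omega
  have hchain' : IsChain (· ≤ ·) (C' : Set P) :=
    hC.mono (by intro u hu; exact Finset.mem_of_mem_erase hu)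
  obtain ⟨m, hmC', hmax⟩ := C'.exists_maximal hne
  have hm_top : ∀ b ∈ C', b ≤ m := by
    intro b hb
    rcases eq_or_ne b m with rfl | hne'
    · exact le_rfl
    · rcases hchain' hb hmC' hne' with h' | h'
      · exact h'
      · exact absurd (lt_of_le_of_ne h' (Ne.symm hne')) (fun hlt => not_le_of_gt hlt (hmax hb hlt.le))
  have hma : m < a :=
    lt_of_le_of_ne (hle m (Finset.mem_of_mem_erase hmC'))
      (Finset.ne_of_mem_erase hmC')
  have hmem : level a - 1 ∈ levSet m := ⟨C', hchain', hmC', hm_top, hcard'⟩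
  have h1 := level_le_of_mem hmem
  have h2 := level_lt_level hma
  exact ⟨m, hma, by omega⟩

private lemma key (n : ℕ) : ∀ y z : P, level y + level z = n → ¬ y ≤ z → ¬ z ≤ y →
    ∃ y' z' : P, y' ≤ y ∧ z' ≤ z ∧ ¬ y' ≤ z' ∧ ¬ z' ≤ y' ∧ level y' = level z' := by
  induction n using Nat.strong_induction_on with
  | _ n ih =>
    intro y z hn h1 h2
    rcases lt_trichotomy (level y) (level z) with hlt | heq | hlt
    · -- level z ≥ 2
      have h2le : 2 ≤ level z := by have := one_le_level y; omega
      obtain ⟨z'', hz''lt, hz''lev⟩ := exists_pred_level h2le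
      have hyz'' : ¬ y ≤ z'' := fun h => h1 (h.trans hz''lt.le)
      have hz''y : ¬ z'' ≤ y := by
        intro h
        rcases eq_or_lt_of_le h with heq | h
        · exact h1 (heq ▸ hz''lt.le)
        · have := level_lt_level h
          omega
      obtain ⟨y', z', hy', hz', a1, a2, a3⟩ :=
        ih (level y + level z'') (by have := one_le_level z; omega) y z'' rfl hyz'' hz''y
      exact ⟨y', z', hy', hz'.trans hz''lt.le, a1, a2, a3⟩
    · exact ⟨y, z, le_rfl, le_rfl, h1, h2, heq⟩
    · have h2le : 2 ≤ level y := by have := one_le_level z; omega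
      obtain ⟨y'', hy''lt, hy''lev⟩ := exists_pred_level h2le
      have hzy'' : ¬ z ≤ y'' := fun h => h2 (h.trans hy''lt.le)
      have hy''z : ¬ y'' ≤ z := by
        intro h
        rcases eq_or_lt_of_le h with heq | h
        · exact h2 (heq ▸ hy''lt.le)
        · have := level_lt_level h
          omega
      obtain ⟨y', z', hy', hz', a1, a2, a3⟩ :=
        ih (level y'' + level z) (by have := one_le_level y; omega) y'' z rfl hy''z hzy''
      exact ⟨y', z', hy'.trans hy''lt.le, hz', a1, a2, a3⟩

end aux

/-- If `y, z ≤ x` are incomparable in a finite poset, then there are incomparable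
`y' ≤ y` and `z' ≤ z` with the same level. -/
theorem stmt_4 {P : Type*} [PartialOrder P] [Fintype P]
    (x y z : P) (hy : y ≤ x) (hz : z ≤ x) (h1 : ¬ y ≤ z) (h2 : ¬ z ≤ y) :
    ∃ y' z' : P, y' ≤ y ∧ z' ≤ z ∧ ¬ y' ≤ z' ∧ ¬ z' ≤ y' ∧ level y' = level z' :=
  key (level y + level z) y z rfl h1 h2
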